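/- Let 1 ≤ p < ∞ and let B_u, B_v be the weighted backward shifts on X = ℓ_p(ℤ₊) associated with weight sequences u = (u_n)_{n≥1} and v = (v_n)_{n≥1}. Assume that either liminf_{n→∞} |u₁⋯u_n / (v₁⋯v_n)| = 0 or limsup_{n→∞} |u₁⋯u_n / (v₁⋯v_n)| = ∞. Then for any Borel probability measures m_u, m_v on X such that m_u is B_u-invariant, m_v is B_v-invariant, and m_u(ker e₀*) = 0 = m_v(ker e₀*), where e₀* is the first coordinate functional, the measures m_u and m_v are mutually singular. -/

import Mathlib

set_option maxHeartbeats 1000000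


open MeasureTheory Filter Topology
open scoped ENNReal NNReal

noncomputable instance {𝕂 : Type*} [RCLike 𝕂] {p : ℝ≥0∞} [Fact (1 ≤ p)] :
    MeasurableSpace (lp (fun _ : ℕ => 𝕂) p) := borel _

instance {𝕂 : Type*} [RCLike 𝕂] {p : ℝ≥0∞} [Fact (1 ≤ p)] :
    BorelSpace (lp (fun _ : ℕ => 𝕂) p) := ⟨rfl⟩

lemma coord_cont {𝕂 : Type*} [RCLike 𝕂] {p : ℝ≥0∞} [Fact (1 ≤ p)] (n : ℕ) :
    Continuous fun x : lp (fun _ : ℕ => 𝕂) p => (x : ∀ _ : ℕ, 𝕂) n := by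
  have hp0 : p ≠ 0 := fun h => by simpa [h] using (Fact.out : (1 : ℝ≥0∞) ≤ p)
  refine (LipschitzWith.of_dist_le_mul (K := 1) fun x y => ?_).continuous
  rw [NNReal.coe_one, one_mul, dist_eq_norm, dist_eq_norm]
  have h := lp.norm_apply_le_norm hp0 (x - y) n
  simpa [lp.coeFn_sub, Pi.sub_apply] using h

lemma prod_norm_pos {𝕂 : Type*} [RCLike 𝕂] (w : ℕ → 𝕂) (hw : ∀ n, 1 ≤ n → w n ≠ 0) (n : ℕ) :
    0 < ‖∏ i ∈ Finset.Icc 1 n, w i‖ := by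
  rw [norm_pos_iff]
  exact Finset.prod_ne_zero_iff.mpr fun i hi => hw i (Finset.mem_Icc.mp hi).1

lemma aux_mutuallySingular
    {𝕂 : Type*} [RCLike 𝕂] (p : ℝ≥0∞) [Fact (1 ≤ p)]
    (u v : ℕ → 𝕂) (hu0 : ∀ n, 1 ≤ n → u n ≠ 0) (hv0 : ∀ n, 1 ≤ n → v n ≠ 0)
    (Bu Bv : lp (fun _ : ℕ => 𝕂) p →L[𝕂] lp (fun _ : ℕ => 𝕂) p)
    (hBu : ∀ (x : lp (fun _ : ℕ => 𝕂) p) (n : ℕ),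
        (Bu x : ∀ _ : ℕ, 𝕂) n = u (n + 1) * (x : ∀ _ : ℕ, 𝕂) (n + 1))
    (hBv : ∀ (x : lp (fun _ : ℕ => 𝕂) p) (n : ℕ),
        (Bv x : ∀ _ : ℕ, 𝕂) n = v (n + 1) * (x : ∀ _ : ℕ, 𝕂) (n + 1))
    (hr : ∀ ε : ℝ, 0 < ε → ∃ᶠ n in atTop,
        ‖∏ i ∈ Finset.Icc 1 n, u i‖ / ‖∏ i ∈ Finset.Icc 1 n, v i‖ < ε)
    (mu mv : Measure (lp (fun _ : ℕ => 𝕂) p))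
    [IsProbabilityMeasure mu] [IsProbabilityMeasure mv]
    (hmu : ∀ A : Set (lp (fun _ : ℕ => 𝕂) p), MeasurableSet A → mu (Bu ⁻¹' A) = mu A)
    (hmv : ∀ A : Set (lp (fun _ : ℕ => 𝕂) p), MeasurableSet A → mv (Bv ⁻¹' A) = mv A)
    (hker_u : mu {x : lp (fun _ : ℕ => 𝕂) p | (x : ∀ _ : ℕ, 𝕂) 0 = 0} = 0) :
    mu.MutuallySingular mv := by
  set X := lp (fun _ : ℕ => 𝕂) p
  have hcoord : ∀ n : ℕ, Measurable fun x : X => (x : ∀ _ : ℕ, 𝕂) n :=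
    fun n => (coord_cont n).measurable
  -- coordinate 0 of powers
  have pow_coord : ∀ (B : X →L[𝕂] X) (w : ℕ → 𝕂),
      (∀ (x : X) (n : ℕ), (B x : ∀ _ : ℕ, 𝕂) n = w (n + 1) * (x : ∀ _ : ℕ, 𝕂) (n + 1)) →
      ∀ (k : ℕ) (x : X), ((B ^ k) x : ∀ _ : ℕ, 𝕂) 0
        = (∏ i ∈ Finset.Icc 1 k, w i) * (x : ∀ _ : ℕ, 𝕂) k := by
    intro B w hB k
    induction k with
    | zero => intro x; simp
    | succ k ih =>
      intro x
      rw [pow_succ, ContinuousLinearMap.mul_apply, ih (B x), hB,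
        Finset.prod_Icc_succ_top (Nat.le_add_left 1 k)]
      ring
  -- invariance under powers
  have inv_pow : ∀ (B : X →L[𝕂] X) (m : Measure X),
      (∀ A : Set X, MeasurableSet A → m (B ⁻¹' A) = m A) →
      ∀ (k : ℕ) (A : Set X), MeasurableSet A → m ((B ^ k) ⁻¹' A) = m A := by
    intro B m hm k
    induction k with
    | zero =>
      intro A hA
      have h1 : ⇑((B : _) ^ 0) = id := rfl
      rw [h1, Set.preimage_id]
    | succ k ih =>
      intro A hA
      have hpre : (B ^ (k + 1)) ⁻¹' A = (B ^ k) ⁻¹' (B ⁻¹' A) := by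
        rw [pow_succ']; rfl
      rw [hpre, ih (B ⁻¹' A) (hA.preimage B.continuous.measurable), hm A hA]
  set α : ℕ → ℝ := fun n => ‖∏ i ∈ Finset.Icc 1 n, u i‖ with hαdef
  set β : ℕ → ℝ := fun n => ‖∏ i ∈ Finset.Icc 1 n, v i‖ with hβdef
  have hα : ∀ n, 0 < α n := prod_norm_pos u hu0
  have hβ : ∀ n, 0 < β n := prod_norm_pos v hv0
  set Ac : ℝ → Set X := fun c => {x : X | c ≤ ‖(x : ∀ _ : ℕ, 𝕂) 0‖} with hAcdef
  have mAc : ∀ c : ℝ, MeasurableSet (Ac c) :=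
    fun c => measurableSet_le measurable_const (hcoord 0).norm
  have hSetU : ∀ (k : ℕ) (c : ℝ),
      (Bu ^ k) ⁻¹' (Ac c) = {x : X | c ≤ α k * ‖(x : ∀ _ : ℕ, 𝕂) k‖} := by
    intro k c
    ext x
    simp only [Set.mem_preimage, hAcdef, Set.mem_setOf_eq, pow_coord Bu u hBu k x,
      norm_mul, hαdef]
    change c ≤ ‖((Bu ^ k) x : ∀ _ : ℕ, 𝕂) 0‖ ↔ c ≤ ‖∏ i ∈ Finset.Icc 1 k, u i‖ * ‖(x : ∀ _ : ℕ, 𝕂) k‖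
    rw [pow_coord Bu u hBu k x, norm_mul]
  have hSetV : ∀ (k : ℕ) (c : ℝ),
      (Bv ^ k) ⁻¹' (Ac c) = {x : X | c ≤ β k * ‖(x : ∀ _ : ℕ, 𝕂) k‖} := by
    intro k c
    ext x
    simp only [Set.mem_preimage, hAcdef, Set.mem_setOf_eq, pow_coord Bv v hBv k x,
      norm_mul, hβdef]
    change c ≤ ‖((Bv ^ k) x : ∀ _ : ℕ, 𝕂) 0‖ ↔ c ≤ ‖∏ i ∈ Finset.Icc 1 k, v i‖ * ‖(x : ∀ _ : ℕ, 𝕂) k‖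
    rw [pow_coord Bv v hBv k x, norm_mul]
  -- small ball measure under mu tends to 0
  have hmu0 : Tendsto (fun j : ℕ => mu {x : X | ‖(x : ∀ _ : ℕ, 𝕂) 0‖ < 1 / (j + 1)})
      atTop (𝓝 0) := by
    have hmeas : ∀ j : ℕ, MeasurableSet {x : X | ‖(x : ∀ _ : ℕ, 𝕂) 0‖ < 1 / (j + 1 : ℝ)} :=
      fun j => measurableSet_lt (hcoord 0).norm measurable_const
    have hanti : Antitone fun j : ℕ => {x : X | ‖(x : ∀ _ : ℕ, 𝕂) 0‖ < 1 / (j + 1 : ℝ)} := by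
      intro j j' hjj' x hx
      simp only [Set.mem_setOf_eq] at hx ⊢
      refine lt_of_lt_of_le hx ?_
      apply one_div_le_one_div_of_le (by positivity)
      exact_mod_cast Nat.add_le_add_right hjj' 1
    have hiInter : (⋂ j : ℕ, {x : X | ‖(x : ∀ _ : ℕ, 𝕂) 0‖ < 1 / (j + 1 : ℝ)})
        = {x : X | (x : ∀ _ : ℕ, 𝕂) 0 = 0} := by
      ext x
      simp only [Set.mem_iInter, Set.mem_setOf_eq]
      constructor
      · intro h
        by_contra hx0
        obtain ⟨j, hj⟩ := exists_nat_one_div_lt (norm_pos_iff.mpr hx0)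
        exact absurd (h j) (not_lt.mpr hj.le)
      · intro h j
        simp [h]
        positivity
    have := tendsto_measure_iInter_atTop
      (fun j => (hmeas j).nullMeasurableSet) hanti ⟨0, measure_ne_top _ _⟩ (μ := mu)
    rw [hiInter, hker_u] at this
    exact this
  -- tail measure under mv tends to 0
  have hmv0 : Tendsto (fun j : ℕ => mv (Ac ((j : ℝ) + 1))) atTop (𝓝 0) := by
    have hanti : Antitone fun j : ℕ => Ac ((j : ℝ) + 1) := by
      intro j j' hjj' x hx
      simp only [hAcdef, Set.mem_setOf_eq] at hx ⊢
      refine le_trans ?_ hx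
      exact_mod_cast Nat.add_le_add_right hjj' 1
    have hiInter : (⋂ j : ℕ, Ac ((j : ℝ) + 1)) = (∅ : Set X) := by
      ext x
      simp only [Set.mem_iInter, hAcdef, Set.mem_setOf_eq, Set.mem_empty_iff_false,
        iff_false, not_forall, not_le]
      obtain ⟨j, hj⟩ := exists_nat_gt (‖(x : ∀ _ : ℕ, 𝕂) 0‖ - 1)
      exact ⟨j, by linarith⟩
    have := tendsto_measure_iInter_atTop
      (fun j => (mAc _).nullMeasurableSet) hanti ⟨0, measure_ne_top _ _⟩ (μ := mv)
    rw [hiInter, measure_empty] at this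
    exact this
  -- choose data
  have hchoice : ∀ k : ℕ, ∃ (c s : ℝ) (n : ℕ), 0 < c ∧ 0 < s ∧
      mu {x : X | ‖(x : ∀ _ : ℕ, 𝕂) 0‖ < c} ≤ (2⁻¹ : ℝ≥0∞) ^ k ∧
      mv (Ac s) ≤ (2⁻¹ : ℝ≥0∞) ^ k ∧
      α n / β n < c / s := by
    intro k
    have hε : (0 : ℝ≥0∞) < 2⁻¹ ^ k := by
      apply ENNReal.pow_pos
      simp
    obtain ⟨j₁, hj₁⟩ := (hmu0.eventually_lt_const hε).exists
    obtain ⟨j₂, hj₂⟩ := (hmv0.eventually_lt_const hε).exists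
    have hc : (0 : ℝ) < 1 / (j₁ + 1) := by positivity
    have hs : (0 : ℝ) < (j₂ : ℝ) + 1 := by positivity
    obtain ⟨n, hn⟩ := (hr ((1 / (j₁ + 1)) / ((j₂ : ℝ) + 1)) (by positivity)).exists
    exact ⟨1 / (j₁ + 1), (j₂ : ℝ) + 1, n, hc, hs, hj₁.le, hj₂.le, hn⟩
  choose c s n hc hs hmuc hmvs hrat using hchoice
  set F : ℕ → Set X := fun k => {x : X | c k / α (n k) ≤ ‖(x : ∀ _ : ℕ, 𝕂) (n k)‖} with hFdef
  have hFmeas : ∀ k, MeasurableSet (F k) :=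
    fun k => measurableSet_le measurable_const (hcoord _).norm
  -- mu of complements is small
  have hmuF : ∀ k, mu ((F k)ᶜ) ≤ (2⁻¹ : ℝ≥0∞) ^ k := by
    intro k
    have h1 : (F k)ᶜ = (Bu ^ (n k)) ⁻¹' ((Ac (c k))ᶜ) := by
      rw [Set.preimage_compl, hSetU]
      ext x
      simp only [Set.mem_compl_iff, hFdef, Set.mem_setOf_eq, not_le]
      rw [lt_div_iff₀ (hα (n k)), mul_comm]
    have h2 : mu ((Bu ^ (n k)) ⁻¹' ((Ac (c k))ᶜ)) = mu ((Ac (c k))ᶜ) :=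
      inv_pow Bu mu hmu _ _ (mAc _).compl
    have h3 : (Ac (c k))ᶜ = {x : X | ‖(x : ∀ _ : ℕ, 𝕂) 0‖ < c k} := by
      ext x; simp [hAcdef, not_le]
    rw [h1, h2, h3]
    exact hmuc k
  -- mv of F k is small
  have hmvF : ∀ k, mv (F k) ≤ (2⁻¹ : ℝ≥0∞) ^ k := by
    intro k
    have hsub : F k ⊆ (Bv ^ (n k)) ⁻¹' (Ac (s k)) := by
      intro x hx
      rw [hSetV]
      simp only [Set.mem_setOf_eq] at hx ⊢
      have h1 : α (n k) * s k < c k * β (n k) :=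
        (div_lt_div_iff₀ (hβ (n k)) (hs k)).mp (hrat k)
      have h2 : s k / β (n k) < c k / α (n k) := by
        rw [div_lt_div_iff₀ (hβ (n k)) (hα (n k))]
        nlinarith
      rw [← div_le_iff₀' (hβ (n k))]
      exact (h2.trans_le hx).le
    calc mv (F k) ≤ mv ((Bv ^ (n k)) ⁻¹' (Ac (s k))) := measure_mono hsub
      _ = mv (Ac (s k)) := inv_pow Bv mv hmv _ _ (mAc _)
      _ ≤ _ := hmvs k
  have hgeo : (∑' k : ℕ, ((2 : ℝ≥0∞)⁻¹) ^ k) ≠ ∞ := by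
    have h2 : (2 : ℝ≥0∞)⁻¹ < 1 := ENNReal.inv_lt_one.mpr (by norm_num)
    rw [ENNReal.tsum_geometric]
    exact ENNReal.inv_ne_top.mpr fun h => absurd (tsub_eq_zero_iff_le.mp h) (not_le.mpr h2)
  have hsum_v : (∑' k, mv (F k)) ≠ ∞ :=
    ne_top_of_le_ne_top hgeo (ENNReal.tsum_le_tsum hmvF)
  have hsum_u : (∑' k, mu ((F k)ᶜ)) ≠ ∞ :=
    ne_top_of_le_ne_top hgeo (ENNReal.tsum_le_tsum hmuF)
  refine ⟨(limsup F atTop)ᶜ, (MeasurableSet.measurableSet_limsup hFmeas).compl, ?_, ?_⟩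
  · have hsubset : (limsup F atTop)ᶜ ⊆ limsup (fun k => (F k)ᶜ) atTop := by
      rw [limsup_compl]
      exact liminf_le_limsup
    have h0 : mu (limsup (fun k => (F k)ᶜ) atTop) = 0 :=
      measure_limsup_atTop_eq_zero hsum_u
    exact le_antisymm (h0 ▸ measure_mono hsubset) zero_le
  · rw [compl_compl]
    exact measure_limsup_atTop_eq_zero hsum_v

/-- If `liminf |u₁⋯u_n/(v₁⋯v_n)| = 0` or `limsup |u₁⋯u_n/(v₁⋯v_n)| = ∞`
(i.e. `B_u` and `B_v` are not similar), then invariant probability measures for `B_u`, `B_v`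
not charging `ker e₀*` are mutually singular. -/
theorem mutuallySingular_of_not_similar
    {𝕂 : Type*} [RCLike 𝕂] (p : ℝ≥0∞) [Fact (1 ≤ p)] (hp : p ≠ ⊤)
    (u v : ℕ → 𝕂) (hu0 : ∀ n, 1 ≤ n → u n ≠ 0) (hv0 : ∀ n, 1 ≤ n → v n ≠ 0)
    (hubdd : ∃ M : ℝ, ∀ n, ‖u n‖ ≤ M) (hvbdd : ∃ M : ℝ, ∀ n, ‖v n‖ ≤ M)
    (Bu Bv : lp (fun _ : ℕ => 𝕂) p →L[𝕂] lp (fun _ : ℕ => 𝕂) p)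
    (hBu : ∀ (x : lp (fun _ : ℕ => 𝕂) p) (n : ℕ),
        (Bu x : ∀ _ : ℕ, 𝕂) n = u (n + 1) * (x : ∀ _ : ℕ, 𝕂) (n + 1))
    (hBv : ∀ (x : lp (fun _ : ℕ => 𝕂) p) (n : ℕ),
        (Bv x : ∀ _ : ℕ, 𝕂) n = v (n + 1) * (x : ∀ _ : ℕ, 𝕂) (n + 1))
    (hratio :
      (∀ ε : ℝ, 0 < ε → ∃ᶠ n in atTop,
          ‖∏ i ∈ Finset.Icc 1 n, u i‖ / ‖∏ i ∈ Finset.Icc 1 n, v i‖ < ε) ∨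
      (∀ M : ℝ, ∃ᶠ n in atTop,
          M < ‖∏ i ∈ Finset.Icc 1 n, u i‖ / ‖∏ i ∈ Finset.Icc 1 n, v i‖))
    (mu mv : Measure (lp (fun _ : ℕ => 𝕂) p))
    [IsProbabilityMeasure mu] [IsProbabilityMeasure mv]
    (hmu : ∀ A : Set (lp (fun _ : ℕ => 𝕂) p), MeasurableSet A → mu (Bu ⁻¹' A) = mu A)
    (hmv : ∀ A : Set (lp (fun _ : ℕ => 𝕂) p), MeasurableSet A → mv (Bv ⁻¹' A) = mv A)
    (hker_u : mu {x : lp (fun _ : ℕ => 𝕂) p | (x : ∀ _ : ℕ, 𝕂) 0 = 0} = 0)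
    (hker_v : mv {x : lp (fun _ : ℕ => 𝕂) p | (x : ∀ _ : ℕ, 𝕂) 0 = 0} = 0) :
    mu.MutuallySingular mv := by
  rcases hratio with h | h
  · exact aux_mutuallySingular p u v hu0 hv0 Bu Bv hBu hBv h mu mv hmu hmv hker_u
  · refine (aux_mutuallySingular p v u hv0 hu0 Bv Bu hBv hBu ?_ mv mu hmv hmu hker_v).symm
    intro ε hε
    refine (h (1 / ε)).mono fun k hk => ?_
    have hαk : 0 < ‖∏ i ∈ Finset.Icc 1 k, u i‖ := prod_norm_pos u hu0 k
    have hβk : 0 < ‖∏ i ∈ Finset.Icc 1 k, v i‖ := prod_norm_pos v hv0 k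
    rw [div_lt_div_iff₀ hε hβk] at hk
    rw [div_lt_iff₀ hαk]
    nlinarith
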